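/- Let Λ be a finite set of edge labels and k ∈ ℕ. Consider any infinite sequence G₀, G₁, G₂, … of finite directed edge-labelled multigraphs over Λ (say G_i has vertex set Fin(n_i) and edge-count function E_i : Fin(n_i) → Fin(n_i) → Λ → ℕ) such that in every G_i every undirected path has length at most k. Then there exist indices i < j such that G_i is a subgraph of G_j, i.e., there is an injective map f : Fin(n_i) → Fin(n_j) with E_i(u, v, λ) ≤ E_j(f(u), f(v), λ) for all vertices u, v and all λ ∈ Λ. -/

import Mathlib

/-- The underlying simple graph of a finite directed edge-labelled multigraph
given by its edge-count function `E`: two distinct vertices are adjacent iff some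
labelled edge connects them in either direction. -/
def underlying {Λ : Type*} {n : ℕ} (E : Fin n → Fin n → Λ → ℕ) : SimpleGraph (Fin n) where
  Adj u v := u ≠ v ∧ ∃ l : Λ, 0 < E u v l ∨ 0 < E v u l
  symm := by
    constructor
    rintro u v ⟨h, l, hl⟩
    exact ⟨h.symm, l, hl.symm⟩
  loopless := by
    constructor
    rintro v ⟨h, -⟩
    exact h rfl

namespace Ding

variable {Λ : Type*} [Fintype Λ]

abbrev Lab (Λ : Type*) (k : ℕ) : Type _ := ℕ × ((Option (Fin k) × Λ × Bool) → ℕ)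

universe u

def TF (Λ : Type u) (k : ℕ) : ℕ → Type u
  | 0 => PEmpty.{u+1}
  | h + 1 => Lab Λ k × List (TF Λ k h)

def rel {k : ℕ} (a b : Lab Λ k) : Prop := a.2 ≤ b.2

instance {k : ℕ} : IsRefl (Lab Λ k) rel := ⟨fun _ => le_refl _⟩
instance {k : ℕ} : IsTrans (Lab Λ k) rel := ⟨fun _ _ _ h1 h2 => le_trans h1 h2⟩

def Emb {Λ : Type*} {k : ℕ} : ∀ h, TF Λ k h → TF Λ k h → Prop
  | 0, t, _ => t.elim
  | h + 1, t, t' => rel t.1 t'.1 ∧ List.SublistForall₂ (Emb h) t.2 t'.2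

def ids {Λ : Type*} {k : ℕ} : ∀ h, TF Λ k h → List ℕ
  | 0, t => t.elim
  | h + 1, t => t.1.1 :: (t.2.map (ids h)).flatten

lemma embIsRefl {k : ℕ} (h : ℕ) : IsRefl (TF Λ k h) (Emb h) := by
  induction h with
  | zero => exact ⟨fun t => t.elim⟩
  | succ h ih =>
    exact ⟨fun t => ⟨le_refl _, refl_of (List.SublistForall₂ (Emb h)) _⟩⟩

lemma embIsTrans {k : ℕ} (h : ℕ) : IsTrans (TF Λ k h) (Emb h) := by
  induction h with
  | zero => exact ⟨fun t => t.elim⟩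
  | succ h ih =>
    exact ⟨fun a b c h1 h2 => ⟨le_trans h1.1 h2.1,
      trans_of (List.SublistForall₂ (Emb h)) h1.2 h2.2⟩⟩

lemma relPwo (k : ℕ) : (Set.univ : Set (Lab Λ k)).PartiallyWellOrderedOn rel := by
  intro f
  obtain ⟨m, n, hmn, hle⟩ := Set.isPWO_of_wellQuasiOrderedLE
    (Set.univ : Set ((Option (Fin k) × Λ × Bool) → ℕ)) (fun n => ⟨(f n).1.2, Set.mem_univ _⟩)
  exact ⟨m, n, hmn, hle⟩

lemma embPwo {k : ℕ} (h : ℕ) :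
    (Set.univ : Set (TF Λ k h)).PartiallyWellOrderedOn (Emb h) := by
  induction h with
  | zero => exact fun f => (f 0).1.elim
  | succ h ih =>
    haveI := embIsRefl (Λ := Λ) (k := k) h
    haveI := embIsTrans (Λ := Λ) (k := k) h
    intro f
    haveI : IsPreorder (TF Λ k h) (Emb h) :=
      { refl := refl_of (Emb h), trans := fun _ _ _ => trans_of (Emb h) }
    haveI : IsPreorder (Lab Λ k) rel :=
      { refl := refl_of rel, trans := fun _ _ _ => trans_of rel }
    obtain ⟨g, hg⟩ := (relPwo (Λ := Λ) k).exists_monotone_subseq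
      (f := fun n => ((f n).1 : Lab Λ k × List (TF Λ k h)).1) (fun _ => Set.mem_univ _)
    obtain ⟨a, b, hab, hsl⟩ :=
      Set.PartiallyWellOrderedOn.partiallyWellOrderedOn_sublistForall₂ (Emb h) ih
      (fun n => ⟨((f (g n)).1 : Lab Λ k × List (TF Λ k h)).2, fun x _ => Set.mem_univ x⟩)
    exact ⟨g a, g b, g.strictMono hab, hg a b hab.le, hsl⟩

section Graph

attribute [local instance] Classical.propDecidable

variable {m : ℕ}

def Adj (E : Fin m → Fin m → Λ → ℕ) (x y : Fin m) : Prop := (underlying E).Adj x y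

def Reach (E : Fin m → Fin m → Λ → ℕ) (s : Finset (Fin m)) (r x : Fin m) : Prop :=
  Relation.ReflTransGen (fun a b => Adj E a b ∧ a ∈ s ∧ b ∈ s) r x

def PathFrom (E : Fin m → Fin m → Λ → ℕ) (s : Finset (Fin m)) (r : Fin m)
    (l : List (Fin m)) : Prop :=
  List.Chain (Adj E) r l ∧ (r :: l).Nodup ∧ ∀ x ∈ r :: l, x ∈ s

def mkLabel (E : Fin m → Fin m → Λ → ℕ) (k : ℕ) (x : Fin m) (anc : List (Fin m)) :
    Lab Λ k :=
  (x.val, fun q => match q with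
    | (none, l, _) => E x x l
    | (some p, l, b) => if hp : (p : ℕ) < anc.length then
        (if b then E (anc.get ⟨p, hp⟩) x l else E x (anc.get ⟨p, hp⟩) l) else 0)

def Faithful (E : Fin m → Fin m → Λ → ℕ) (k : ℕ) : ∀ h, TF Λ k h → List (Fin m) → Prop
  | 0, _, _ => True
  | h + 1, t, anc => ∃ x : Fin m, t.1 = mkLabel E k x anc ∧
      ∀ c ∈ t.2, Faithful E k h c (x :: anc)

def CrossZero (E : Fin m → Fin m → Λ → ℕ) (c d : List ℕ) : Prop :=
  ∀ (x y : Fin m), x.val ∈ c → y.val ∈ d → ∀ l, E x y l = 0 ∧ E y x l = 0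

def Sep (E : Fin m → Fin m → Λ → ℕ) (k : ℕ) : ∀ h, TF Λ k h → Prop
  | 0, _ => True
  | h + 1, t => (∀ c ∈ t.2, Sep E k h c) ∧
      List.Pairwise (fun c d => CrossZero E (ids h c) (ids h d)) t.2

variable {E : Fin m → Fin m → Λ → ℕ} {k : ℕ}

lemma adj_zero {x y : Fin m} (hxy : x ≠ y) (h : ¬ Adj E x y) :
    ∀ l, E x y l = 0 ∧ E y x l = 0 := by
  intro l
  rw [Adj] at h
  simp only [underlying, ne_eq] at h
  push_neg at h
  obtain ⟨h1, h2⟩ := h hxy l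
  omega

lemma chain_toWalk : ∀ (l : List (Fin m)) (r : Fin m), List.Chain (Adj E) r l →
    ∃ (x : Fin m) (w : (underlying E).Walk r x), w.support = r :: l := by
  intro l
  induction l with
  | nil => exact fun r _ => ⟨r, SimpleGraph.Walk.nil, rfl⟩
  | cons y l ih =>
    intro r hc
    simp only [List.Chain, List.isChain_cons_cons] at hc
    obtain ⟨x, w, hw⟩ := ih y hc.2
    exact ⟨x, SimpleGraph.Walk.cons (id (α := (underlying E).Adj r y) hc.1) w, by simp [hw]⟩

lemma pathBound (hk : ∀ u v (p : (underlying E).Walk u v), p.IsPath → p.length ≤ k)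
    {r : Fin m} {l : List (Fin m)} (hc : List.Chain (Adj E) r l)
    (hd : (r :: l).Nodup) : l.length ≤ k := by
  obtain ⟨x, w, hw⟩ := chain_toWalk l r hc
  have hp : w.IsPath := by rw [SimpleGraph.Walk.isPath_def, hw]; exact hd
  have := hk _ _ w hp
  have hlen := w.length_support
  rw [hw] at hlen
  simp at hlen
  omega

lemma reach_split {s' : Finset (Fin m)} {r x : Fin m} (hr : r ∉ s')
    (hre : Reach E (insert r s') r x) (hx : x ∈ s') :
    ∃ c, Adj E r c ∧ c ∈ s' ∧ Reach E s' c x := by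
  induction hre with
  | refl => exact absurd hx hr
  | @tail y z hry hyz ih =>
    by_cases hyr : y = r
    · exact ⟨z, hyr ▸ hyz.1, hx, Relation.ReflTransGen.refl⟩
    · have hy : y ∈ s' := by
        rcases Finset.mem_insert.1 hyz.2.1 with h | h
        · exact absurd h hyr
        · exact h
      obtain ⟨c, hc1, hc2, hc3⟩ := ih hy
      exact ⟨c, hc1, hc2, hc3.tail ⟨hyz.1, hy, hx⟩⟩

lemma reach_shrink_comp {s' : Finset (Fin m)} {c x : Fin m}
    (hre : Reach E s' c x) :
    Reach E (s'.filter (fun y => Reach E s' c y)) c x := by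
  induction hre with
  | refl => exact Relation.ReflTransGen.refl
  | @tail y z hcy hyz ih =>
    have hz : Reach E s' c z := hcy.tail hyz
    exact ih.tail ⟨hyz.1, Finset.mem_filter.2 ⟨hyz.2.1, hcy⟩, Finset.mem_filter.2 ⟨hyz.2.2, hz⟩⟩

lemma reach_avoid {s' C : Finset (Fin m)} {r : Fin m} (hr : r ∉ s') (hC : C ⊆ s')
    (hcl : ∀ a ∈ C, ∀ b ∈ s', Adj E a b → b ∈ C) {x : Fin m}
    (hre : Reach E (insert r s') r x) (hx : x ∈ s') (hxC : x ∉ C) :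
    Reach E (insert r (s' \ C)) r x := by
  induction hre with
  | refl => exact absurd hx hr
  | @tail y z hry hyz ih =>
    by_cases hyr : y = r
    · exact Relation.ReflTransGen.single ⟨hyr ▸ hyz.1, Finset.mem_insert_self _ _,
        Finset.mem_insert.2 (Or.inr (Finset.mem_sdiff.2 ⟨hx, hxC⟩))⟩
    · have hy : y ∈ s' := by
        rcases Finset.mem_insert.1 hyz.2.1 with h | h
        · exact absurd h hyr
        · exact h
      have hyC : y ∉ C := fun hyC => hxC (hcl y hyC _ hx hyz.1)
      exact (ih hy hyC).tail ⟨hyz.1,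
        Finset.mem_insert.2 (Or.inr (Finset.mem_sdiff.2 ⟨hy, hyC⟩)),
        Finset.mem_insert.2 (Or.inr (Finset.mem_sdiff.2 ⟨hx, hxC⟩))⟩

lemma pathFrom_mono {s t : Finset (Fin m)} (hst : s ⊆ t) {r : Fin m} {l : List (Fin m)}
    (h : PathFrom E s r l) : PathFrom E t r l :=
  ⟨h.1, h.2.1, fun x hx => hst (h.2.2 x hx)⟩

lemma ids_multiset_cons {h : ℕ} (a : Lab Λ k) (cs : List (TF Λ k h)) :
    ids (h+1) ((a, cs) : TF Λ k (h+1)) = a.1 :: (cs.map (ids h)).flatten := rfl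

lemma buildC : ∀ (n : ℕ) (s' : Finset (Fin m)), s'.card ≤ n → ∀ (r : Fin m), r ∉ s' →
    ∀ (anc : List (Fin m)) (h : ℕ), anc.length + h ≤ k →
    (∀ x ∈ s', Reach E (insert r s') r x) →
    (∀ l, PathFrom E (insert r s') r l → l.length ≤ h) →
    ∃ cs : List (TF Λ k h),
      (∀ c ∈ cs, Faithful E k h c (r :: anc) ∧ Sep E k h c) ∧
      List.Pairwise (fun c d => CrossZero E (ids h c) (ids h d)) cs ∧
      (((cs.map (ids h)).flatten : List ℕ) : Multiset ℕ) = s'.val.map Fin.val := by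
  intro n
  induction n using Nat.strong_induction_on with
  | _ n IH =>
  intro s' hcard r hr anc h hk hreach hpathI
  rcases s'.eq_empty_or_nonempty with hs | ⟨x₀, hx₀⟩
  · exact ⟨[], by simp, by simp, by simp [hs]⟩
  -- find a neighbour c of r in s'
  obtain ⟨c, hadj, hcs, -⟩ := reach_split hr (hreach x₀ hx₀) hx₀
  have hcr : c ≠ r := fun hh => hr (hh ▸ hcs)
  -- h is positive
  have hpos : 1 ≤ h := by
    have := hpathI [c] ⟨List.chain_cons.2 ⟨hadj, List.Chain.nil⟩,
      by simp [hcr.symm, Ne, fun hh : r = c => hcr hh.symm],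
      by intro x hx; simp at hx; rcases hx with rfl | rfl <;> simp [hcs]⟩
    simpa using this
  obtain ⟨h', rfl⟩ : ∃ h', h = h' + 1 := ⟨h - 1, by omega⟩
  -- the component of c in s'
  set C := s'.filter (fun y => Reach E s' c y) with hCdef
  have hcC : c ∈ C := Finset.mem_filter.2 ⟨hcs, Relation.ReflTransGen.refl⟩
  have hCsub : C ⊆ s' := Finset.filter_subset _ _
  have hclosed : ∀ a ∈ C, ∀ b ∈ s', Adj E a b → b ∈ C := by
    intro a ha b hb hab
    rcases Finset.mem_filter.1 ha with ⟨has, hre⟩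
    exact Finset.mem_filter.2 ⟨hb, hre.tail ⟨hab, has, hb⟩⟩
  have hrC : r ∉ C := fun hh => hr (hCsub hh)
  -- build the subtree children for the component
  have hcardC : (C.erase c).card < n :=
    lt_of_lt_of_le (lt_of_lt_of_le (Finset.card_erase_lt_of_mem hcC)
      (Finset.card_le_card hCsub)) hcard
  obtain ⟨cs_t, ht1, ht2, ht3⟩ := IH _ hcardC (C.erase c) le_rfl c
    (Finset.notMem_erase _ _) (r :: anc) h' (by simp only [List.length_cons]; omega)
    (by
      intro x hx
      rw [Finset.insert_erase hcC]
      have hxC := Finset.mem_of_mem_erase hx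
      exact reach_shrink_comp (Finset.mem_filter.1 hxC).2)
    (by
      intro l hl
      rw [Finset.insert_erase hcC] at hl
      have : PathFrom E (insert r s') r (c :: l) := by
        refine ⟨List.chain_cons.2 ⟨hadj, hl.1⟩, ?_, ?_⟩
        · refine List.nodup_cons.2 ⟨?_, hl.2.1⟩
          intro hmem
          exact hrC (hl.2.2 r hmem)
        · intro x hx
          rcases List.mem_cons.1 hx with rfl | hx
          · exact Finset.mem_insert_self _ _
          · exact Finset.mem_insert.2 (Or.inr (hCsub (hl.2.2 x hx)))
      have := hpathI _ this
      simpa using this)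
  -- build the rest of the forest
  have hcardR : (s' \ C).card < n := by
    have : (s' \ C).card < s'.card := by
      apply Finset.card_lt_card
      refine ⟨Finset.sdiff_subset, fun hsub => ?_⟩
      exact absurd (Finset.mem_sdiff.1 (hsub hcs)).2 (by simp [hcC])
    omega
  obtain ⟨cs_r, hr1, hr2, hr3⟩ := IH _ hcardR (s' \ C) le_rfl r
    (fun hh => hr (Finset.mem_sdiff.1 hh).1) anc (h' + 1) hk
    (by
      intro x hx
      rcases Finset.mem_sdiff.1 hx with ⟨hx1, hx2⟩
      exact reach_avoid hr hCsub hclosed (hreach x hx1) hx1 hx2)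
    (fun l hl => hpathI l (pathFrom_mono
      (Finset.insert_subset_insert _ Finset.sdiff_subset) hl))
  -- assemble
  set t : TF Λ k (h' + 1) := (mkLabel E k c (r :: anc), cs_t) with htdef
  have hidst : (ids (h'+1) t : Multiset ℕ) = C.val.map Fin.val := by
    rw [htdef, ids_multiset_cons]
    have : (mkLabel E k c (r :: anc)).1 = c.val := rfl
    rw [this]
    have := Finset.insert_erase hcC
    calc ((c.val :: (cs_t.map (ids h')).flatten : List ℕ) : Multiset ℕ)
        = c.val ::ₘ ((cs_t.map (ids h')).flatten : Multiset ℕ) := rfl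
      _ = c.val ::ₘ ((C.erase c).val.map Fin.val) := by rw [ht3]
      _ = C.val.map Fin.val := by
          rw [Finset.erase_val, ← Multiset.map_cons,
            Multiset.cons_erase (show c ∈ C.val from hcC)]
  have memC : ∀ {y : Fin m}, y.val ∈ ids (h'+1) t → y ∈ C := by
    intro y hy
    have : (y.val : ℕ) ∈ (C.val.map Fin.val) := by
      rw [← hidst]; exact hy
    obtain ⟨y', hy', hyy⟩ := Multiset.mem_map.1 this
    exact (Fin.val_injective hyy) ▸ hy'
  have memR : ∀ {y : Fin m} {d}, d ∈ cs_r → y.val ∈ ids (h'+1) d → y ∈ s' \ C := by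
    intro y d hd hy
    have h1 : (y.val : ℕ) ∈ ((cs_r.map (ids (h'+1))).flatten : List ℕ) :=
      List.mem_flatten.2 ⟨ids (h'+1) d, List.mem_map.2 ⟨d, hd, rfl⟩, hy⟩
    have : (y.val : ℕ) ∈ ((s' \ C).val.map Fin.val) := by
      rw [← hr3]; exact h1
    obtain ⟨y', hy', hyy⟩ := Multiset.mem_map.1 this
    exact (Fin.val_injective hyy) ▸ hy'
  refine ⟨t :: cs_r, ?_, ?_, ?_⟩
  · intro c' hc'
    rcases List.mem_cons.1 hc' with rfl | hc'
    · constructor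
      · exact ⟨c, rfl, fun ch hch => (ht1 ch hch).1⟩
      · exact ⟨fun ch hch => (ht1 ch hch).2, ht2⟩
    · exact hr1 c' hc'
  · refine List.pairwise_cons.2 ⟨?_, hr2⟩
    intro d hd x y hx hy l
    have hxC : x ∈ C := memC hx
    have hyR : y ∈ s' \ C := memR hd hy
    have hxy : x ≠ y := fun hh => (Finset.mem_sdiff.1 hyR).2 (hh ▸ hxC)
    have hnadj : ¬ Adj E x y := fun hadj' =>
      (Finset.mem_sdiff.1 hyR).2 (hclosed x hxC y (Finset.mem_sdiff.1 hyR).1 hadj')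
    exact adj_zero hxy hnadj l
  · have : (((t :: cs_r).map (ids (h'+1))).flatten : List ℕ)
        = ids (h'+1) t ++ (cs_r.map (ids (h'+1))).flatten := by simp
    rw [this]
    have hsplit : C.val + (s' \ C).val = s'.val := by
      rw [Finset.sdiff_val]
      exact add_tsub_cancel_of_le (Finset.val_le_iff.2 hCsub)
    calc ((ids (h'+1) t ++ (cs_r.map (ids (h'+1))).flatten : List ℕ) : Multiset ℕ)
        = (ids (h'+1) t : Multiset ℕ) + ((cs_r.map (ids (h'+1))).flatten : Multiset ℕ) := by
          simp
      _ = C.val.map Fin.val + (s' \ C).val.map Fin.val := by rw [hidst, hr3]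
      _ = s'.val.map Fin.val := by rw [← Multiset.map_add, hsplit]

lemma buildD (hbd : ∀ (r : Fin m) (l : List (Fin m)),
      List.Chain (Adj E) r l → (r :: l).Nodup → l.length ≤ k) :
    ∀ (n : ℕ) (s : Finset (Fin m)), s.card ≤ n →
    ∃ F : List (TF Λ k (k+1)),
      (∀ t ∈ F, Faithful E k (k+1) t [] ∧ Sep E k (k+1) t) ∧
      List.Pairwise (fun c d => CrossZero E (ids (k+1) c) (ids (k+1) d)) F ∧
      (((F.map (ids (k+1))).flatten : List ℕ) : Multiset ℕ) = s.val.map Fin.val := by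
  intro n
  induction n using Nat.strong_induction_on with
  | _ n IH =>
  intro s hcard
  rcases s.eq_empty_or_nonempty with hs | ⟨r, hrs⟩
  · exact ⟨[], by simp, by simp, by simp [hs]⟩
  set C := s.filter (fun y => Reach E s r y) with hCdef
  have hrC : r ∈ C := Finset.mem_filter.2 ⟨hrs, Relation.ReflTransGen.refl⟩
  have hCsub : C ⊆ s := Finset.filter_subset _ _
  have hclosed : ∀ a ∈ C, ∀ b ∈ s, Adj E a b → b ∈ C := by
    intro a ha b hb hab
    rcases Finset.mem_filter.1 ha with ⟨has, hre⟩
    exact Finset.mem_filter.2 ⟨hb, hre.tail ⟨hab, has, hb⟩⟩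
  have hcardC : (C.erase r).card < n :=
    lt_of_lt_of_le (lt_of_lt_of_le (Finset.card_erase_lt_of_mem hrC)
      (Finset.card_le_card hCsub)) hcard
  obtain ⟨cs_t, ht1, ht2, ht3⟩ := buildC (C.erase r).card (C.erase r) le_rfl r
    (Finset.notMem_erase _ _) [] k (show ([] : List (Fin m)).length + k ≤ k by simp)
    (by
      intro x hx
      rw [Finset.insert_erase hrC]
      have hxC := Finset.mem_of_mem_erase hx
      exact reach_shrink_comp (Finset.mem_filter.1 hxC).2)
    (fun l hl => hbd r l hl.1 hl.2.1)
  have hcardR : (s \ C).card < n := by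
    have : (s \ C).card < s.card := by
      apply Finset.card_lt_card
      refine ⟨Finset.sdiff_subset, fun hsub => ?_⟩
      exact absurd (Finset.mem_sdiff.1 (hsub hrs)).2 (by simp [hrC])
    omega
  obtain ⟨cs_r, hr1, hr2, hr3⟩ := IH _ hcardR (s \ C) le_rfl
  set t : TF Λ k (k + 1) := (mkLabel E k r [], cs_t) with htdef
  have hidst : (ids (k+1) t : Multiset ℕ) = C.val.map Fin.val := by
    rw [htdef, ids_multiset_cons]
    have h1 : (mkLabel E k r []).1 = r.val := rfl
    rw [h1]
    calc ((r.val :: (cs_t.map (ids k)).flatten : List ℕ) : Multiset ℕ)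
        = r.val ::ₘ ((cs_t.map (ids k)).flatten : Multiset ℕ) := rfl
      _ = r.val ::ₘ ((C.erase r).val.map Fin.val) := by rw [ht3]
      _ = C.val.map Fin.val := by
          rw [Finset.erase_val, ← Multiset.map_cons,
            Multiset.cons_erase (show r ∈ C.val from hrC)]
  have memC : ∀ {y : Fin m}, y.val ∈ ids (k+1) t → y ∈ C := by
    intro y hy
    have : (y.val : ℕ) ∈ (C.val.map Fin.val) := by rw [← hidst]; exact hy
    obtain ⟨y', hy', hyy⟩ := Multiset.mem_map.1 this
    exact (Fin.val_injective hyy) ▸ hy'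
  have memR : ∀ {y : Fin m} {d}, d ∈ cs_r → y.val ∈ ids (k+1) d → y ∈ s \ C := by
    intro y d hd hy
    have h1 : (y.val : ℕ) ∈ ((cs_r.map (ids (k+1))).flatten : List ℕ) :=
      List.mem_flatten.2 ⟨ids (k+1) d, List.mem_map.2 ⟨d, hd, rfl⟩, hy⟩
    have : (y.val : ℕ) ∈ ((s \ C).val.map Fin.val) := by rw [← hr3]; exact h1
    obtain ⟨y', hy', hyy⟩ := Multiset.mem_map.1 this
    exact (Fin.val_injective hyy) ▸ hy'
  refine ⟨t :: cs_r, ?_, ?_, ?_⟩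
  · intro c' hc'
    rcases List.mem_cons.1 hc' with rfl | hc'
    · constructor
      · exact ⟨r, rfl, fun ch hch => (ht1 ch hch).1⟩
      · exact ⟨fun ch hch => (ht1 ch hch).2, ht2⟩
    · exact hr1 c' hc'
  · refine List.pairwise_cons.2 ⟨?_, hr2⟩
    intro d hd x y hx hy l
    have hxC : x ∈ C := memC hx
    have hyR : y ∈ s \ C := memR hd hy
    have hxy : x ≠ y := fun hh => (Finset.mem_sdiff.1 hyR).2 (hh ▸ hxC)
    have hnadj : ¬ Adj E x y := fun hadj' =>
      (Finset.mem_sdiff.1 hyR).2 (hclosed x hxC y (Finset.mem_sdiff.1 hyR).1 hadj')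
    exact adj_zero hxy hnadj l
  · have hsplit : C.val + (s \ C).val = s.val := by
      rw [Finset.sdiff_val]
      exact add_tsub_cancel_of_le (Finset.val_le_iff.2 hCsub)
    calc ((((t :: cs_r).map (ids (k+1))).flatten : List ℕ) : Multiset ℕ)
        = (ids (k+1) t : Multiset ℕ) + ((cs_r.map (ids (k+1))).flatten : Multiset ℕ) := by
          simp
      _ = C.val.map Fin.val + (s \ C).val.map Fin.val := by rw [hidst, hr3]
      _ = s.val.map Fin.val := by rw [← Multiset.map_add, hsplit]

end Graph

section Transfer

variable {m₁ m₂ : ℕ} (E₁ : Fin m₁ → Fin m₁ → Λ → ℕ) (E₂ : Fin m₂ → Fin m₂ → Λ → ℕ) {k : ℕ}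

def Okay (π : List (Fin m₁ × Fin m₂)) : Prop :=
  ∀ q ∈ π, ∀ q' ∈ π, ∀ l, E₁ q.1 q'.1 l ≤ E₂ q.2 q'.2 l

def AncOk (anc₁ : List (Fin m₁)) (anc₂ : List (Fin m₂))
    (π : List (Fin m₁ × Fin m₂)) : Prop :=
  ∀ q ∈ π, ∀ (p : ℕ) (hp : p < anc₁.length) (hp' : p < anc₂.length), ∀ l,
    E₁ q.1 (anc₁.get ⟨p, hp⟩) l ≤ E₂ q.2 (anc₂.get ⟨p, hp'⟩) l ∧
    E₁ (anc₁.get ⟨p, hp⟩) q.1 l ≤ E₂ (anc₂.get ⟨p, hp'⟩) q.2 l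

variable {E₁ E₂}

lemma okay_append {π₁ π₂ : List (Fin m₁ × Fin m₂)} (h1 : Okay E₁ E₂ π₁) (h2 : Okay E₁ E₂ π₂)
    (hcross : ∀ q ∈ π₁, ∀ q' ∈ π₂, ∀ l,
      E₁ q.1 q'.1 l ≤ E₂ q.2 q'.2 l ∧ E₁ q'.1 q.1 l ≤ E₂ q'.2 q.2 l) :
    Okay E₁ E₂ (π₁ ++ π₂) := by
  intro q hq q' hq' l
  rcases List.mem_append.1 hq with hq | hq <;> rcases List.mem_append.1 hq' with hq' | hq'
  · exact h1 q hq q' hq' l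
  · exact (hcross q hq q' hq' l).1
  · exact (hcross q' hq' q hq l).2
  · exact h2 q hq q' hq' l

lemma ancOk_append {anc₁ anc₂} {π₁ π₂ : List (Fin m₁ × Fin m₂)}
    (h1 : AncOk E₁ E₂ anc₁ anc₂ π₁) (h2 : AncOk E₁ E₂ anc₁ anc₂ π₂) :
    AncOk E₁ E₂ anc₁ anc₂ (π₁ ++ π₂) := by
  intro q hq
  rcases List.mem_append.1 hq with hq | hq
  · exact h1 q hq
  · exact h2 q hq

/-- Transfer along a list of trees. -/
lemma transferList {h : ℕ}
    (IH : ∀ (t t' : TF Λ k h), Emb h t t' →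
      ∀ (anc₁ : List (Fin m₁)) (anc₂ : List (Fin m₂)), anc₁.length = anc₂.length →
      anc₁.length + h ≤ k + 1 → Faithful E₁ k h t anc₁ → Faithful E₂ k h t' anc₂ →
      Sep E₁ k h t →
      ∃ π : List (Fin m₁ × Fin m₂),
        π.map (fun q => q.1.val) = ids h t ∧
        (π.map (fun q => q.2.val)).Sublist (ids h t') ∧
        Okay E₁ E₂ π ∧ AncOk E₁ E₂ anc₁ anc₂ π)
    (anc₁ : List (Fin m₁)) (anc₂ : List (Fin m₂)) (hlen : anc₁.length = anc₂.length)
    (hkk : anc₁.length + h ≤ k + 1) :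
    ∀ (cs ds : List (TF Λ k h)), List.SublistForall₂ (Emb h) cs ds →
    (∀ c ∈ cs, Faithful E₁ k h c anc₁ ∧ Sep E₁ k h c) →
    (∀ d ∈ ds, Faithful E₂ k h d anc₂) →
    List.Pairwise (fun c d => CrossZero E₁ (ids h c) (ids h d)) cs →
    ∃ π : List (Fin m₁ × Fin m₂),
      π.map (fun q => q.1.val) = (cs.map (ids h)).flatten ∧
      (π.map (fun q => q.2.val)).Sublist ((ds.map (ids h)).flatten) ∧
      Okay E₁ E₂ π ∧ AncOk E₁ E₂ anc₁ anc₂ π := by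
  intro cs ds hsl
  induction hsl with
  | nil =>
    intro _ _ _
    exact ⟨[], by simp, by simp, fun q hq => absurd hq List.not_mem_nil,
      fun q hq => absurd hq List.not_mem_nil⟩
  | @cons c d cs ds hcd hsl ihl =>
    intro hcs hds hpw
    obtain ⟨π₁, hπ1a, hπ1b, hπ1c, hπ1d⟩ := IH c d hcd anc₁ anc₂ hlen hkk
      (hcs c (List.mem_cons_self)).1 (hds d (List.mem_cons_self))
      (hcs c (List.mem_cons_self)).2
    obtain ⟨π₂, hπ2a, hπ2b, hπ2c, hπ2d⟩ := ihl
      (fun c' hc' => hcs c' (List.mem_cons_of_mem _ hc'))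
      (fun d' hd' => hds d' (List.mem_cons_of_mem _ hd'))
      (List.pairwise_cons.1 hpw).2
    refine ⟨π₁ ++ π₂, ?_, ?_, ?_, ancOk_append hπ1d hπ2d⟩
    · simp only [List.map_append, hπ1a, hπ2a, List.map_cons, List.flatten_cons]
    · simp only [List.map_append, List.map_cons, List.flatten_cons]
      exact List.Sublist.append hπ1b hπ2b
    · refine okay_append hπ1c hπ2c ?_
      intro q hq q' hq' l
      have hq1 : q.1.val ∈ ids h c := by rw [← hπ1a]; exact List.mem_map_of_mem hq
      have hq'1 : q'.1.val ∈ (cs.map (ids h)).flatten := by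
        rw [← hπ2a]; exact List.mem_map_of_mem hq'
      obtain ⟨lc, hlc, hq'm⟩ := List.mem_flatten.1 hq'1
      obtain ⟨c'', hc'', rfl⟩ := List.mem_map.1 hlc
      have hcz : CrossZero E₁ (ids h c) (ids h c'') :=
        (List.pairwise_cons.1 hpw).1 c'' hc''
      obtain ⟨hz1, hz2⟩ := hcz q.1 q'.1 hq1 hq'm l
      exact ⟨hz1 ▸ Nat.zero_le _, hz2 ▸ Nat.zero_le _⟩
  | @cons_right d cs ds hsl ihl =>
    intro hcs hds hpw
    obtain ⟨π, ha, hb, hc, hd⟩ := ihl hcs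
      (fun d' hd' => hds d' (List.mem_cons_of_mem _ hd')) hpw
    refine ⟨π, ha, ?_, hc, hd⟩
    simp only [List.map_cons, List.flatten_cons]
    exact hb.trans (List.sublist_append_right _ _)

lemma mkLabel_anc_lt {m : ℕ} {E : Fin m → Fin m → Λ → ℕ} {x : Fin m}
    {anc : List (Fin m)} {p : ℕ} (hp : p < anc.length) (hpk : p < k) (l : Λ) (b : Bool) :
    (mkLabel E k x anc).2 (some ⟨p, hpk⟩, l, b)
      = if b then E (anc.get ⟨p, hp⟩) x l else E x (anc.get ⟨p, hp⟩) l := by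
  simp only [mkLabel]
  rw [dif_pos hp]

lemma transfer : ∀ (h : ℕ) (t t' : TF Λ k h), Emb h t t' →
    ∀ (anc₁ : List (Fin m₁)) (anc₂ : List (Fin m₂)), anc₁.length = anc₂.length →
    anc₁.length + h ≤ k + 1 → Faithful E₁ k h t anc₁ → Faithful E₂ k h t' anc₂ →
    Sep E₁ k h t →
    ∃ π : List (Fin m₁ × Fin m₂),
      π.map (fun q => q.1.val) = ids h t ∧
      (π.map (fun q => q.2.val)).Sublist (ids h t') ∧
      Okay E₁ E₂ π ∧ AncOk E₁ E₂ anc₁ anc₂ π := by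
  intro h
  induction h with
  | zero => exact fun t => t.elim
  | succ h ih =>
    intro t t' hemb anc₁ anc₂ hlen hkk hf hf' hsep
    obtain ⟨hrel, hsl⟩ := hemb
    obtain ⟨x, hx1, hx2⟩ := hf
    obtain ⟨x', hx'1, hx'2⟩ := hf'
    obtain ⟨hsep1, hsep2⟩ := hsep
    obtain ⟨πc, hca, hcb, hcc, hcd⟩ := transferList ih (x :: anc₁) (x' :: anc₂)
      (by simp [hlen]) (by simp only [List.length_cons]; omega)
      t.2 t'.2 hsl (fun c hc => ⟨hx2 c hc, hsep1 c hc⟩) hx'2 hsep2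
    have hanclen : anc₁.length ≤ k := by omega
    refine ⟨(x, x') :: πc, ?_, ?_, ?_, ?_⟩
    · show x.val :: πc.map (fun q => q.1.val) = ids (h+1) t
      rw [hca]
      show _ = t.1.1 :: _
      rw [hx1]
      rfl
    · show (x'.val :: πc.map (fun q => q.2.val)).Sublist (ids (h+1) t')
      have : ids (h+1) t' = t'.1.1 :: (t'.2.map (ids h)).flatten := rfl
      rw [this, hx'1]
      exact List.Sublist.cons₂ _ hcb
    · intro q hq q' hq' l
      rcases List.mem_cons.1 hq with rfl | hq <;> rcases List.mem_cons.1 hq' with rfl | hq'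
      · -- loops
        have h1 : E₁ x x l = (mkLabel E₁ k x anc₁).2 (none, l, true) := rfl
        have h2 : E₂ x' x' l = (mkLabel E₂ k x' anc₂).2 (none, l, true) := rfl
        rw [h1, h2, ← hx1, ← hx'1]
        exact hrel (none, l, true)
      · -- root vs node below
        exact (hcd q' hq' 0 (by simp) (by simp) l).2
      · -- node below vs root
        exact (hcd q hq 0 (by simp) (by simp) l).1
      · exact hcc q hq q' hq' l
    · intro q hq p hp hp' l
      rcases List.mem_cons.1 hq with rfl | hq
      · have hpk : p < k := lt_of_lt_of_le hp hanclen
        have e1 : E₁ x (anc₁.get ⟨p, hp⟩) l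
            = (mkLabel E₁ k x anc₁).2 (some ⟨p, hpk⟩, l, false) := by
          rw [mkLabel_anc_lt hp hpk]; simp
        have e2 : E₂ x' (anc₂.get ⟨p, hp'⟩) l
            = (mkLabel E₂ k x' anc₂).2 (some ⟨p, hpk⟩, l, false) := by
          rw [mkLabel_anc_lt hp' hpk]; simp
        have e3 : E₁ (anc₁.get ⟨p, hp⟩) x l
            = (mkLabel E₁ k x anc₁).2 (some ⟨p, hpk⟩, l, true) := by
          rw [mkLabel_anc_lt hp hpk]; simp
        have e4 : E₂ (anc₂.get ⟨p, hp'⟩) x' l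
            = (mkLabel E₂ k x' anc₂).2 (some ⟨p, hpk⟩, l, true) := by
          rw [mkLabel_anc_lt hp' hpk]; simp
        rw [e1, e2, e3, e4, ← hx1, ← hx'1]
        exact ⟨hrel (some ⟨p, hpk⟩, l, false), hrel (some ⟨p, hpk⟩, l, true)⟩
      · have := hcd q hq (p + 1) (by simp; omega) (by simp; omega) l
        simpa using this

end Transfer

end Ding

/-- Ding: the subgraph ordering is a wqo on finite directed edge-labelled
multigraphs over a finite label set whose undirected paths have length at most `k`. -/
theorem stmt_10 {Λ : Type*} [Fintype Λ] (k : ℕ)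
    (m : ℕ → ℕ) (E : ∀ i : ℕ, Fin (m i) → Fin (m i) → Λ → ℕ)
    (hpath : ∀ i : ℕ, ∀ u v : Fin (m i), ∀ p : (underlying (E i)).Walk u v,
      p.IsPath → p.length ≤ k) :
    ∃ i j : ℕ, i < j ∧
      ∃ f : Fin (m i) → Fin (m j), Function.Injective f ∧
        ∀ (u v : Fin (m i)) (l : Λ), E i u v l ≤ E j (f u) (f v) l := by
  classical
  open Ding in
  have hforest : ∀ i, ∃ F : List (TF Λ k (k+1)),
      (∀ t ∈ F, Faithful (E i) k (k+1) t [] ∧ Sep (E i) k (k+1) t) ∧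
      List.Pairwise (fun c d => CrossZero (E i) (ids (k+1) c) (ids (k+1) d)) F ∧
      (((F.map (ids (k+1))).flatten : List ℕ) : Multiset ℕ)
        = (Finset.univ : Finset (Fin (m i))).val.map Fin.val := by
    intro i
    exact buildD (fun r l hc hd => pathBound (hpath i) hc hd)
      (Finset.univ.card) Finset.univ le_rfl
  choose F hF1 hF2 hF3 using hforest
  haveI := Ding.embIsRefl (Λ := Λ) (k := k) (k+1)
  haveI := Ding.embIsTrans (Λ := Λ) (k := k) (k+1)
  haveI : IsPreorder (Ding.TF Λ k (k+1)) (Ding.Emb (k+1)) :=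
    { refl := refl_of (Ding.Emb (k+1)), trans := fun _ _ _ => trans_of (Ding.Emb (k+1)) }
  obtain ⟨i, j, hij, hsl⟩ := Set.PartiallyWellOrderedOn.partiallyWellOrderedOn_sublistForall₂
    (Ding.Emb (k+1)) (Ding.embPwo (k+1)) (fun n => ⟨F n, fun x _ => Set.mem_univ x⟩)
  refine ⟨i, j, hij, ?_⟩
  obtain ⟨π, hπa, hπb, hπc, hπd⟩ := Ding.transferList (E₁ := E i) (E₂ := E j)
    (Ding.transfer (k+1)) [] [] rfl (by simp) (F i) (F j) hsl
    (fun c hc => hF1 i c hc) (fun d hd => (hF1 j d hd).1) (hF2 i)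
  have hmem : ∀ u : Fin (m i), ∃ q, q ∈ π ∧ q.1 = u := by
    intro u
    have h1 : (u.val : ℕ) ∈ ((((F i).map (Ding.ids (k+1))).flatten : List ℕ) : Multiset ℕ) := by
      rw [hF3 i]
      exact Multiset.mem_map.2 ⟨u, by simp, rfl⟩
    rw [Multiset.mem_coe, ← hπa] at h1
    obtain ⟨q, hq, hqv⟩ := List.mem_map.1 h1
    exact ⟨q, hq, Fin.val_injective hqv⟩
  choose g hg1 hg2 using hmem
  have hnodfull : (((F j).map (Ding.ids (k+1))).flatten : List ℕ).Nodup := by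
    rw [← Multiset.coe_nodup, hF3 j]
    exact Multiset.Nodup.map Fin.val_injective Finset.univ.nodup
  have hnod : (π.map (fun q => q.2.val)).Nodup := hnodfull.sublist hπb
  refine ⟨fun u => (g u).2, ?_, ?_⟩
  · intro u v huv
    have hinj := List.inj_on_of_nodup_map hnod
    have : g u = g v := hinj (hg1 u) (hg1 v) (by simpa using congrArg Fin.val huv)
    calc u = (g u).1 := (hg2 u).symm
      _ = (g v).1 := by rw [this]
      _ = v := hg2 v
  · intro u v l
    have := hπc (g u) (hg1 u) (g v) (hg1 v) l
    rwa [hg2 u, hg2 v] at this
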